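/- Let q be a positive integer, let G be a graph, and let (M, d) be a length space that is q-quasi-isometric to G via a q-quasi-isometry φ: V(G) → M. Then for every set X ⊆ V(G) such that the induced subgraph G[X] is connected, the set N^{q+1}[φ(X)] ⊆ M is path-connected. -/

import Mathlib

open Set ENNReal

variable {M : Type*} [MetricSpace M]

/-- The arc length (total variation on `[0,1]`) of a parametrised path `f : ℝ → M`. -/
noncomputable def pathLength (f : ℝ → M) : ℝ≥0∞ :=
  eVariationOn f (Set.Icc 0 1)

/-- `f` is a (parametrised) path from the set `X` to the set `Y`. -/
def IsPathFromTo (f : ℝ → M) (X Y : Set M) : Prop :=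
  ContinuousOn f (Set.Icc 0 1) ∧ f 0 ∈ X ∧ f 1 ∈ Y

/-- A metric space is a length space if any two points at distance `d` are joined by paths
of arc length arbitrarily close to `d`. -/
def IsLengthSpace (M : Type*) [MetricSpace M] : Prop :=
  ∀ x y : M, ∀ ε : ℝ, 0 < ε → ∃ f : ℝ → M,
    ContinuousOn f (Set.Icc 0 1) ∧ f 0 = x ∧ f 1 = y ∧
    pathLength f ≤ ENNReal.ofReal (dist x y + ε)

/-- `N^r[X]`: the set of points joined to `X` by a path of arc length at most `r`. -/
def pathNbhd (X : Set M) (r : ℝ) : Set M :=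
  {a | ∃ f : ℝ → M, ContinuousOn f (Set.Icc 0 1) ∧ f 0 = a ∧ f 1 ∈ X ∧
    pathLength f ≤ ENNReal.ofReal r}

/-- The path-distance between the sets `X` and `Y` is at least `K`: every path from `X` to `Y`
has arc length at least `K`. -/
def PathDistGE (X Y : Set M) (K : ℝ) : Prop :=
  ∀ f : ℝ → M, IsPathFromTo f X Y → ENNReal.ofReal K ≤ pathLength f

/-- A set `S` is path-connected if any two of its points are joined by a path inside `S`. -/
def IsPathConnSet (S : Set M) : Prop :=
  ∀ x ∈ S, ∀ y ∈ S, JoinedIn S x y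

/-- `B, P` form a `K`-fat minor model of the graph `H` in the metric space `M`. -/
def IsSpaceFatMinorModel {W : Type*} (H : SimpleGraph W) (K : ℝ)
    (B : W → Set M) (P : H.edgeSet → Set M) : Prop :=
  (∀ w, (B w).Nonempty ∧ IsPathConnSet (B w)) ∧
  (∀ e, IsPathConnSet (P e)) ∧
  (∀ (w : W) (e : H.edgeSet), w ∈ (e : Sym2 W) → (B w ∩ P e).Nonempty) ∧
  (∀ w w' : W, w ≠ w' → PathDistGE (B w) (B w') K) ∧
  (∀ e e' : H.edgeSet, e ≠ e' → PathDistGE (P e) (P e') K) ∧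
  (∀ (w : W) (e : H.edgeSet), w ∉ (e : Sym2 W) → PathDistGE (B w) (P e) K)

/-- The metric space `M` contains `H` as a `K`-fat minor. -/
def SpaceHasFatMinor (M : Type*) [MetricSpace M] {W : Type*} (H : SimpleGraph W) (K : ℝ) : Prop :=
  ∃ (B : W → Set M) (P : H.edgeSet → Set M), IsSpaceFatMinorModel H K B P

/-- `φ` is a `q`-quasi-isometry from the graph `G` to the metric space `M`. -/
def IsGraphSpaceQuasiIsometry {V : Type*} (q : ℕ) (G : SimpleGraph V) (φ : V → M) : Prop :=
  (∀ x y : V, (q : ℝ)⁻¹ * (G.dist x y : ℝ) - q ≤ dist (φ x) (φ y) ∧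
     dist (φ x) (φ y) ≤ q * (G.dist x y : ℝ) + q) ∧
  ∀ z : M, ∃ v : V, dist z (φ v) ≤ q


section Aux

variable {M : Type*} [MetricSpace M]

lemma joinedIn_of_contOn {S : Set M} {f : ℝ → M} (hf : ContinuousOn f (Set.Icc 0 1))
    (hS : ∀ t ∈ Set.Icc (0:ℝ) 1, f t ∈ S) : JoinedIn S (f 0) (f 1) :=
  ⟨{ toFun := fun t => f t, continuous_toFun := hf.restrict,
     source' := rfl, target' := rfl },
   fun t => hS t t.2⟩

lemma mem_pathNbhd_right {X : Set M} {r : ℝ} {f : ℝ → M}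
    (hf : ContinuousOn f (Set.Icc 0 1)) (h1 : f 1 ∈ X) {t : ℝ} (ht : t ∈ Set.Icc (0:ℝ) 1)
    (hlen : eVariationOn f (Set.Icc t 1) ≤ ENNReal.ofReal r) : f t ∈ pathNbhd X r := by
  set g : ℝ → ℝ := fun s => t + s * (1 - t) with hg
  have hmaps : Set.MapsTo g (Set.Icc 0 1) (Set.Icc t 1) := fun s hs => by
    constructor
    · simp only [hg]; nlinarith [hs.1, hs.2, ht.2]
    · simp only [hg]; nlinarith [hs.1, hs.2, ht.2]
  have hmono : MonotoneOn g (Set.Icc 0 1) := fun a _ b _ hab => by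
    simp only [hg]; nlinarith [ht.2]
  have hg0 : g 0 = t := by simp [hg]
  have hg1 : g 1 = 1 := by simp [hg]
  refine ⟨f ∘ g, hf.comp (by fun_prop) (hmaps.mono_right (Set.Icc_subset_Icc ht.1 le_rfl)),
    by simp [Function.comp, hg0], by simp [Function.comp, hg1, h1], ?_⟩
  calc eVariationOn (f ∘ g) (Set.Icc 0 1) = eVariationOn f (g '' Set.Icc 0 1) :=
        eVariationOn.comp_eq_of_monotoneOn f g hmono
    _ ≤ eVariationOn f (Set.Icc t 1) := eVariationOn.mono f (Set.image_subset_iff.2 hmaps)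
    _ ≤ _ := hlen

lemma mem_pathNbhd_left {X : Set M} {r : ℝ} {f : ℝ → M}
    (hf : ContinuousOn f (Set.Icc 0 1)) (h0 : f 0 ∈ X) {t : ℝ} (ht : t ∈ Set.Icc (0:ℝ) 1)
    (hlen : eVariationOn f (Set.Icc 0 t) ≤ ENNReal.ofReal r) : f t ∈ pathNbhd X r := by
  set g : ℝ → ℝ := fun s => t - s * t with hg
  have hmaps : Set.MapsTo g (Set.Icc 0 1) (Set.Icc 0 t) := fun s hs => by
    constructor
    · simp only [hg]; nlinarith [hs.1, hs.2, ht.1]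
    · simp only [hg]; nlinarith [hs.1, hs.2, ht.1]
  have hanti : AntitoneOn g (Set.Icc 0 1) := fun a _ b _ hab => by
    simp only [hg]; nlinarith [ht.1]
  have hg0 : g 0 = t := by simp [hg]
  have hg1 : g 1 = 0 := by simp [hg]
  refine ⟨f ∘ g, hf.comp (by fun_prop) (hmaps.mono_right (Set.Icc_subset_Icc le_rfl ht.2)),
    by simp [Function.comp, hg0], by simp [Function.comp, hg1, h0], ?_⟩
  calc eVariationOn (f ∘ g) (Set.Icc 0 1) = eVariationOn f (g '' Set.Icc 0 1) :=
        eVariationOn.comp_eq_of_antitoneOn f g hanti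
    _ ≤ eVariationOn f (Set.Icc 0 t) := eVariationOn.mono f (Set.image_subset_iff.2 hmaps)
    _ ≤ _ := hlen

end Aux

/-- If `φ` is a `q`-quasi-isometry from a graph `G` to a length space `M`, then for every
vertex set `X` inducing a connected subgraph of `G`, the neighbourhood `N^{q+1}[φ(X)]`
is path-connected. -/
theorem pathConn_nbhd_image_of_connected {V : Type*} (q : ℕ) (hq : 0 < q)
    (G : SimpleGraph V) {M : Type*} [MetricSpace M] (hM : IsLengthSpace M)
    (φ : V → M) (hφ : IsGraphSpaceQuasiIsometry q G φ)
    (X : Set V) (hX : (G.induce X).Connected) :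
    IsPathConnSet (pathNbhd (φ '' X) ((q : ℝ) + 1)) := by
  set S := pathNbhd (φ '' X) ((q : ℝ) + 1) with hSdef
  have hmemφ : ∀ u ∈ X, φ u ∈ S := by
    intro u hu
    refine ⟨fun _ => φ u, continuousOn_const, rfl, ⟨u, hu, rfl⟩, ?_⟩
    have : pathLength (fun _ => φ u) = 0 :=
      eVariationOn.constant_on (Set.subsingleton_singleton.anti
        (Set.image_subset_iff.2 fun _ _ => rfl))
    rw [pathLength] at this
    simp [pathLength, this]
  have hanchor : ∀ a ∈ S, ∃ u ∈ X, JoinedIn S a (φ u) := by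
    rintro a ⟨f, hf, hf0, hf1, hlen⟩
    obtain ⟨u, hu, hfu⟩ := hf1
    refine ⟨u, hu, ?_⟩
    have hmem : ∀ t ∈ Set.Icc (0:ℝ) 1, f t ∈ S := fun t ht =>
      mem_pathNbhd_right hf (⟨u, hu, hfu⟩ : f 1 ∈ φ '' X) ht
        (le_trans (eVariationOn.mono f (Set.Icc_subset_Icc ht.1 le_rfl)) hlen)
    have := joinedIn_of_contOn hf hmem
    rwa [hf0, ← hfu] at this
  have hadj : ∀ u v : V, u ∈ X → v ∈ X → G.Adj u v → JoinedIn S (φ u) (φ v) := by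
    intro u v hu hv huv
    have hdist : dist (φ u) (φ v) ≤ 2 * q := by
      have h1 : G.dist u v = 1 := SimpleGraph.dist_eq_one_iff_adj.2 huv
      have h2 := (hφ.1 u v).2
      rw [h1] at h2; push_cast at h2; linarith
    obtain ⟨f, hf, hf0, hf1, hlen⟩ := hM (φ u) (φ v) 1 one_pos
    have hlen' : pathLength f ≤ ENNReal.ofReal (2 * q + 1) :=
      hlen.trans (ENNReal.ofReal_le_ofReal (by linarith))
    have hmem : ∀ t ∈ Set.Icc (0:ℝ) 1, f t ∈ S := by
      intro t ht
      by_cases h : eVariationOn f (Set.Icc t 1) ≤ ENNReal.ofReal ((q : ℝ) + 1)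
      · exact mem_pathNbhd_right hf (hf1 ▸ ⟨v, hv, rfl⟩) ht h
      · apply mem_pathNbhd_left hf (hf0 ▸ ⟨u, hu, rfl⟩) ht
        have hsplit : eVariationOn f (Set.Icc 0 t) + eVariationOn f (Set.Icc t 1)
            = eVariationOn f (Set.Icc 0 1) := by
          have := eVariationOn.Icc_add_Icc f (s := Set.univ) ht.1 ht.2 (Set.mem_univ t)
          simpa using this
        have hq1 : ENNReal.ofReal ((q : ℝ) + 1) ≤ eVariationOn f (Set.Icc t 1) :=
          (not_le.1 h).le
        have hkey : eVariationOn f (Set.Icc 0 t) + ENNReal.ofReal ((q : ℝ) + 1)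
            ≤ ENNReal.ofReal (q : ℝ) + ENNReal.ofReal ((q : ℝ) + 1) := by
          calc eVariationOn f (Set.Icc 0 t) + ENNReal.ofReal ((q : ℝ) + 1)
              ≤ eVariationOn f (Set.Icc 0 t) + eVariationOn f (Set.Icc t 1) :=
                add_le_add_right hq1 _
            _ = eVariationOn f (Set.Icc 0 1) := hsplit
            _ ≤ ENNReal.ofReal (2 * q + 1) := hlen'
            _ = ENNReal.ofReal (q : ℝ) + ENNReal.ofReal ((q : ℝ) + 1) := by
                rw [← ENNReal.ofReal_add (by positivity) (by positivity)]; ring_nf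
        have := (ENNReal.add_le_add_iff_right (by simp)).1 hkey
        exact this.trans (ENNReal.ofReal_le_ofReal (by linarith))
    have := joinedIn_of_contOn hf hmem
    rwa [hf0, hf1] at this
  have hwalk : ∀ {u v : X} (_ : (G.induce X).Walk u v), JoinedIn S (φ u) (φ v) := by
    intro u v w
    induction w with
    | nil => exact JoinedIn.refl (hmemφ _ (by exact Subtype.coe_prop _))
    | @cons a b c h p ih => exact (hadj a.1 b.1 a.2 b.2 h).trans ih
  intro x hx y hy
  obtain ⟨u, hu, hxu⟩ := hanchor x hx
  obtain ⟨v, hv, hyv⟩ := hanchor y hy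
  obtain ⟨w⟩ := hX.preconnected ⟨u, hu⟩ ⟨v, hv⟩
  exact hxu.trans ((hwalk w).trans hyv.symm)
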